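/- arXiv:1909.09569 — 2 statements merged into one kernel-verified Lean document; each statement's English description precedes it below -/
import Mathlib

section
/- Convergence of randomized stochastic gradient descent for smooth non-convex objectives (Theorem 1): Let f : ℝ^p → ℝ be differentiable with L-Lipschitz gradient and bounded below by f* (i.e., f(w) ≥ f* for all w). Let w_0 ∈ ℝ^p, let N ≥ 1, and let step sizes γ_1,…,γ_N satisfy 0 < γ_k ≤ 1/L. Suppose the iterates are generated by w_{k+1} = w_k − γ_k G_k, where each stochastic gradient G_k satisfies E[G_k | w_k] = ∇f(w_k) and E[‖G_k − ∇f(w_k)‖² | w_k] ≤ σ². Let H = Σ_{k=1}^N γ_k and let R ∈ {1,…,N} be chosen independently of the G_k's with P(R = k) = γ_k/H. Then E[‖∇f(w_R)‖²] ≤ 2(f(w_0) − f*)/H + (L σ²/H) Σ_{k=1}^N γ_k². -/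
/-!
Statement 0 (Theorem 1, Ghadimi–Lan): convergence of randomized stochastic gradient descent
for smooth non-convex objectives.

The iterates are `w 1 = w0` (the initial point) and `w (k+1) = w k - γ k • G k` for
`k = 1, …, N`; `∇f` is `gradient f` on the Euclidean space `ℝ^p`.  Conditioning on the
iterate `w k` is formalized as conditioning on the σ-algebra generated by `G 1, …, G (k-1)`
(to which `w k` is measurable), namely `⨆ j ∈ Finset.Icc 1 (k-1), MeasurableSpace.comap (G j) _`.
`R` takes values in `{1, …, N}`, has `P(R = k) = γ k / H`, and is independent of the `G k`'s.
-/

open MeasureTheory ProbabilityTheory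

section Aux

lemma coord_abs_le_norm {n : ℕ} (x : EuclideanSpace ℝ (Fin n)) (i : Fin n) : |x i| ≤ ‖x‖ := by
  rw [EuclideanSpace.norm_eq]
  have h1 : |x i| = √(‖x i‖ ^ 2) := by
    rw [Real.sqrt_sq_eq_abs, Real.norm_eq_abs, abs_abs]
  rw [h1]
  apply Real.sqrt_le_sqrt
  exact Finset.single_le_sum (f := fun j => ‖x j‖ ^ 2) (fun j _ => sq_nonneg _)
    (Finset.mem_univ i)

lemma tele_sum (b : ℕ → ℝ) : ∀ N : ℕ, ∑ k ∈ Finset.Icc 1 N, (b k - b (k + 1)) = b 1 - b (N + 1)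
  | 0 => by simp
  | (N + 1) => by
    rw [Finset.sum_Icc_succ_top (by omega), tele_sum b N]; ring

lemma descent_lemma {E : Type*} [NormedAddCommGroup E] [InnerProductSpace ℝ E] [CompleteSpace E]
    {f : E → ℝ} {L : ℝ} (hdiff : Differentiable ℝ f)
    (hLip : ∀ u v, ‖gradient f u - gradient f v‖ ≤ L * ‖u - v‖) (x y : E) :
    f y ≤ f x + inner ℝ (gradient f x) (y - x) + L / 2 * ‖y - x‖ ^ 2 := by
  set v := y - x with hv
  have hgradcont : Continuous (gradient f) := by
    have : LipschitzWith (Real.toNNReal L) (gradient f) := by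
      apply LipschitzWith.of_dist_le_mul
      intro u u'
      simp only [dist_eq_norm]
      calc ‖gradient f u - gradient f u'‖ ≤ L * ‖u - u'‖ := hLip u u'
        _ ≤ (Real.toNNReal L) * ‖u - u'‖ := by
            gcongr; exact (Real.le_coe_toNNReal L)
    exact this.continuous
  have hderiv : ∀ t : ℝ, HasDerivAt (fun s : ℝ => f (x + s • v))
      (inner ℝ (gradient f (x + t • v)) v : ℝ) t := by
    intro t
    have hc : HasDerivAt (fun s : ℝ => x + s • v) v t := by
      simpa using ((hasDerivAt_id t).smul_const v).const_add x
    have hf : HasFDerivAt f (InnerProductSpace.toDual ℝ E (gradient f (x + t • v))) (x + t • v) :=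
      hasGradientAt_iff_hasFDerivAt.mp (hdiff (x + t • v)).hasGradientAt
    have := hf.comp_hasDerivAt t hc
    simpa [Function.comp_def] using this
  have hcont : Continuous fun t : ℝ => (inner ℝ (gradient f (x + t • v)) v : ℝ) := by
    apply Continuous.inner
    · exact hgradcont.comp (continuous_const.add (continuous_id.smul continuous_const))
    · exact continuous_const
  have hint : ∫ t in (0:ℝ)..1, (inner ℝ (gradient f (x + t • v)) v : ℝ)
      = (fun s : ℝ => f (x + s • v)) 1 - (fun s : ℝ => f (x + s • v)) 0 :=
    intervalIntegral.integral_eq_sub_of_hasDerivAt (fun t _ => hderiv t)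
      (hcont.intervalIntegrable 0 1)
  have h01 : f y - f x = ∫ t in (0:ℝ)..1, (inner ℝ (gradient f (x + t • v)) v : ℝ) := by
    rw [hint]; simp [hv]
  have hbound : ∫ t in (0:ℝ)..1, (inner ℝ (gradient f (x + t • v)) v : ℝ)
      ≤ ∫ t in (0:ℝ)..1, ((inner ℝ (gradient f x) v : ℝ) + L * t * ‖v‖ ^ 2) := by
    apply intervalIntegral.integral_mono_on (by norm_num)
    · exact hcont.intervalIntegrable 0 1
    · exact ((continuous_const.add ((continuous_const.mul continuous_id).mul
        continuous_const))).intervalIntegrable 0 1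
    · intro t ht
      have key : (inner ℝ (gradient f (x + t • v)) v : ℝ) - inner ℝ (gradient f x) v
          = inner ℝ (gradient f (x + t • v) - gradient f x) v := by
        rw [inner_sub_left]
      have h1 : (inner ℝ (gradient f (x + t • v) - gradient f x) v : ℝ)
          ≤ ‖gradient f (x + t • v) - gradient f x‖ * ‖v‖ := real_inner_le_norm _ _
      have h2 : ‖gradient f (x + t • v) - gradient f x‖ ≤ L * (t * ‖v‖) := by
        have := hLip (x + t • v) x
        simpa [norm_smul, abs_of_nonneg ht.1, mul_assoc] using this
      nlinarith [norm_nonneg v, mul_le_mul_of_nonneg_right h2 (norm_nonneg v),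
        sq_nonneg ‖v‖]
  have hval : ∫ t in (0:ℝ)..1, ((inner ℝ (gradient f x) v : ℝ) + L * t * ‖v‖ ^ 2)
      = (inner ℝ (gradient f x) v : ℝ) + L / 2 * ‖v‖ ^ 2 := by
    have heq : (fun t : ℝ => (inner ℝ (gradient f x) v : ℝ) + L * t * ‖v‖ ^ 2)
        = fun t : ℝ => (inner ℝ (gradient f x) v : ℝ) + (L * ‖v‖ ^ 2) * t := by
      funext t; ring
    rw [heq, intervalIntegral.integral_add (intervalIntegrable_const)
      ((intervalIntegral.intervalIntegrable_id).const_mul _),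
      intervalIntegral.integral_const_mul, integral_id,
      intervalIntegral.integral_const]
    norm_num; ring
  linarith [h01, hbound, hval]

lemma condexp_comp_clm {α E' F' : Type*} {m m0 : MeasurableSpace α} (hm : m ≤ m0) {μ : Measure α}
    [SigmaFinite (μ.trim hm)]
    [NormedAddCommGroup E'] [NormedSpace ℝ E'] [CompleteSpace E']
    [NormedAddCommGroup F'] [NormedSpace ℝ F'] [CompleteSpace F']
    (T : E' →L[ℝ] F') {g : α → E'} (hg : Integrable g μ) :
    μ[fun ω => T (g ω)|m] =ᵐ[μ] fun ω => T ((μ[g|m]) ω) := by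
  refine (ae_eq_condExp_of_forall_setIntegral_eq hm (T.integrable_comp hg)
    (fun s _ _ => (T.integrable_comp integrable_condExp).integrableOn)
    (fun s hs hμs => ?_)
    ((T.continuous.comp_stronglyMeasurable stronglyMeasurable_condExp).aestronglyMeasurable)).symm
  rw [T.integral_comp_comm (integrable_condExp.integrableOn),
    T.integral_comp_comm hg.integrableOn, setIntegral_condExp hm hg hs]

end Aux

set_option maxHeartbeats 4000000 in
theorem rsg_convergence
    {p : ℕ} {Ω : Type*} [MeasurableSpace Ω] (μ : Measure Ω) [IsProbabilityMeasure μ]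
    (f : EuclideanSpace ℝ (Fin p) → ℝ) (L σ fstar : ℝ)
    (hdiff : Differentiable ℝ f)
    (hLip : ∀ u v, ‖gradient f u - gradient f v‖ ≤ L * ‖u - v‖)
    (hbdd : ∀ w, fstar ≤ f w)
    (w0 : EuclideanSpace ℝ (Fin p)) (N : ℕ) (hN : 1 ≤ N)
    (γ : ℕ → ℝ)
    (hγpos : ∀ k ∈ Finset.Icc 1 N, 0 < γ k)
    (hγle : ∀ k ∈ Finset.Icc 1 N, γ k ≤ 1 / L)
    (G : ℕ → Ω → EuclideanSpace ℝ (Fin p))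
    (hGmeas : ∀ k, Measurable (G k))
    (hGint : ∀ k ∈ Finset.Icc 1 N, Integrable (G k) μ)
    (w : ℕ → Ω → EuclideanSpace ℝ (Fin p))
    (hw1 : ∀ ω, w 1 ω = w0)
    (hupdate : ∀ k ∈ Finset.Icc 1 N, ∀ ω, w (k + 1) ω = w k ω - γ k • G k ω)
    -- unbiasedness: E[G k | w k] = ∇f (w k)
    (hmean : ∀ k ∈ Finset.Icc 1 N,
      μ[G k | ⨆ j ∈ Finset.Icc 1 (k - 1), MeasurableSpace.comap (G j) inferInstance]
        =ᵐ[μ] fun ω => gradient f (w k ω))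
    (hvarint : ∀ k ∈ Finset.Icc 1 N,
      Integrable (fun ω => ‖G k ω - gradient f (w k ω)‖ ^ 2) μ)
    -- bounded conditional variance: E[‖G k - ∇f (w k)‖² | w k] ≤ σ²
    (hvar : ∀ k ∈ Finset.Icc 1 N,
      μ[(fun ω => ‖G k ω - gradient f (w k ω)‖ ^ 2) |
          ⨆ j ∈ Finset.Icc 1 (k - 1), MeasurableSpace.comap (G j) inferInstance]
        ≤ᵐ[μ] fun _ => σ ^ 2)
    (H : ℝ) (hH : H = ∑ k ∈ Finset.Icc 1 N, γ k)
    (R : Ω → ℕ) (hRmeas : Measurable R)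
    (hRrange : ∀ ω, R ω ∈ Finset.Icc 1 N)
    (hRdist : ∀ k ∈ Finset.Icc 1 N, μ {ω | R ω = k} = ENNReal.ofReal (γ k / H))
    (hRindep : IndepFun R (fun ω k => G k ω) μ) :
    ∫ ω, ‖gradient f (w (R ω) ω)‖ ^ 2 ∂μ
      ≤ 2 * (f w0 - fstar) / H + L * σ ^ 2 / H * ∑ k ∈ Finset.Icc 1 N, γ k ^ 2 := by
  -- basic facts
  have hL : 0 < L := by
    have h1 := hγpos 1 (by simp [hN])
    have h2 := hγle 1 (by simp [hN])
    exact one_div_pos.mp (lt_of_lt_of_le h1 h2)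
  have hgradcont : Continuous (gradient f) := by
    have : LipschitzWith (Real.toNNReal L) (gradient f) := by
      apply LipschitzWith.of_dist_le_mul
      intro u u'
      simp only [dist_eq_norm]
      calc ‖gradient f u - gradient f u'‖ ≤ L * ‖u - u'‖ := hLip u u'
        _ ≤ (Real.toNNReal L) * ‖u - u'‖ := by
            gcongr; exact (Real.le_coe_toNNReal L)
    exact this.continuous
  have hHpos : 0 < H := by
    rw [hH]
    exact Finset.sum_pos hγpos (Finset.nonempty_Icc.mpr hN)
  set M : ℕ → MeasurableSpace Ω :=
    fun k => ⨆ j ∈ Finset.Icc 1 (k - 1), MeasurableSpace.comap (G j) inferInstance with hM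
  have hM_le : ∀ k, M k ≤ ‹MeasurableSpace Ω› := fun k =>
    iSup₂_le fun j _ => (hGmeas j).comap_le
  have hsf : ∀ k, SigmaFinite (μ.trim (hM_le k)) := by
    intro k
    haveI := isFiniteMeasure_trim (μ := μ) (hM_le k)
    infer_instance
  -- representation of iterates
  have hwrep : ∀ k, k ≤ N → ∀ ω, w (k + 1) ω = w0 - ∑ j ∈ Finset.Icc 1 k, γ j • G j ω := by
    intro k
    induction k with
    | zero => intro _ ω; simp [hw1 ω]
    | succ n ih =>
      intro hn ω
      rw [hupdate (n + 1) (by simp; omega) ω, ih (by omega) ω,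
        Finset.sum_Icc_succ_top (by omega), sub_sub]
  have hwrep' : ∀ k ∈ Finset.Icc 1 (N + 1), ∀ ω,
      w k ω = w0 - ∑ j ∈ Finset.Icc 1 (k - 1), γ j • G j ω := by
    intro k hk ω
    rw [Finset.mem_Icc] at hk
    obtain ⟨n, rfl⟩ : ∃ n, k = n + 1 := ⟨k - 1, by omega⟩
    simpa using hwrep n (by omega) ω
  -- measurability
  have hwm : ∀ k ∈ Finset.Icc 1 (N + 1), Measurable[M k] (w k) := by
    intro k hk
    have heq : w k = fun ω => w0 - ∑ j ∈ Finset.Icc 1 (k - 1), γ j • G j ω :=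
      funext (hwrep' k hk)
    rw [heq]
    apply Measurable.const_sub
    apply Finset.measurable_sum
    intro j hj
    have hGj : Measurable[M k] (G j) := by
      rw [measurable_iff_comap_le]
      exact le_iSup₂ (f := fun j (_ : j ∈ Finset.Icc 1 (k - 1)) =>
        MeasurableSpace.comap (G j) inferInstance) j hj
    exact hGj.const_smul (γ j)
  have hwMeas : ∀ k ∈ Finset.Icc 1 (N + 1), Measurable (w k) := fun k hk =>
    (hwm k hk).mono (hM_le k) le_rfl
  have hgMeas : ∀ k ∈ Finset.Icc 1 (N + 1), Measurable fun ω => gradient f (w k ω) :=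
    fun k hk => hgradcont.measurable.comp (hwMeas k hk)
  have hIccN : ∀ k ∈ Finset.Icc 1 N, k ∈ Finset.Icc 1 (N + 1) := by
    intro k hk; rw [Finset.mem_Icc] at *; omega
  have hIccN' : ∀ k ∈ Finset.Icc 1 N, k + 1 ∈ Finset.Icc 1 (N + 1) := by
    intro k hk; rw [Finset.mem_Icc] at *; omega
  -- integrability of ‖∇f(w k)‖²
  have hg2int : ∀ k ∈ Finset.Icc 1 N, Integrable (fun ω => ‖gradient f (w k ω)‖ ^ 2) μ := by
    have key : ∀ k, 1 ≤ k → k ≤ N → Integrable (fun ω => ‖gradient f (w k ω)‖ ^ 2) μ := by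
      intro k
      induction k with
      | zero => intro h; omega
      | succ n ih =>
        intro _ hn1
        rcases Nat.eq_zero_or_pos n with hn0 | hnpos
        · subst hn0
          have heq : (fun ω => ‖gradient f (w 1 ω)‖ ^ 2) = fun _ => ‖gradient f w0‖ ^ 2 := by
            funext ω; rw [hw1 ω]
          rw [heq]; exact integrable_const _
        · have hnN : n ∈ Finset.Icc 1 N := by rw [Finset.mem_Icc]; omega
          have hγn := hγpos n hnN
          have ihn := ih hnpos (by omega)
          have hvi := hvarint n hnN
          apply Integrable.mono' ((ihn.const_mul (2 * (1 + L * γ n) ^ 2)).add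
            (hvi.const_mul (2 * (L * γ n) ^ 2)))
          · exact (((hgMeas (n + 1) (by rw [Finset.mem_Icc]; omega)).norm).pow_const
              2).aestronglyMeasurable
          · apply Filter.Eventually.of_forall
            intro ω
            have hup := hupdate n hnN ω
            have hlip := hLip (w (n + 1) ω) (w n ω)
            have hdiffnorm : ‖w (n + 1) ω - w n ω‖ = γ n * ‖G n ω‖ := by
              rw [hup, sub_sub_cancel_left, norm_neg, norm_smul, Real.norm_eq_abs,
                abs_of_pos hγn]
            rw [hdiffnorm] at hlip
            have h2 : ‖G n ω‖ ≤ ‖gradient f (w n ω)‖ + ‖G n ω - gradient f (w n ω)‖ := by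
              have : G n ω = gradient f (w n ω) + (G n ω - gradient f (w n ω)) := by abel
              nth_rewrite 1 [this]
              exact norm_add_le _ _
            have h1 : ‖gradient f (w (n + 1) ω)‖
                ≤ ‖gradient f (w n ω)‖ + L * (γ n * ‖G n ω‖) := by
              have := norm_sub_norm_le (gradient f (w (n + 1) ω)) (gradient f (w n ω))
              linarith
            have hU : ‖gradient f (w (n + 1) ω)‖
                ≤ (1 + L * γ n) * ‖gradient f (w n ω)‖
                  + (L * γ n) * ‖G n ω - gradient f (w n ω)‖ := by
              have hmul : L * (γ n * ‖G n ω‖)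
                  ≤ L * (γ n * (‖gradient f (w n ω)‖ + ‖G n ω - gradient f (w n ω)‖)) :=
                mul_le_mul_of_nonneg_left (mul_le_mul_of_nonneg_left h2 hγn.le) hL.le
              calc ‖gradient f (w (n + 1) ω)‖
                    ≤ ‖gradient f (w n ω)‖ + L * (γ n * (‖gradient f (w n ω)‖
                      + ‖G n ω - gradient f (w n ω)‖)) := by linarith
                  _ = (1 + L * γ n) * ‖gradient f (w n ω)‖
                      + (L * γ n) * ‖G n ω - gradient f (w n ω)‖ := by ring
            have hsq := pow_le_pow_left₀ (norm_nonneg (gradient f (w (n + 1) ω))) hU 2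
            rw [Real.norm_eq_abs, abs_of_nonneg (sq_nonneg _)]
            simp only [Pi.add_apply]
            nlinarith [hsq, sq_nonneg ((1 + L * γ n) * ‖gradient f (w n ω)‖
              - (L * γ n) * ‖G n ω - gradient f (w n ω)‖)]
    intro k hk
    rw [Finset.mem_Icc] at hk
    exact key k hk.1 hk.2
  have hGnormint : ∀ k ∈ Finset.Icc 1 N, Integrable (fun ω => ‖G k ω‖ ^ 2) μ := by
    intro k hk
    apply Integrable.mono' (((hg2int k hk).const_mul 2).add ((hvarint k hk).const_mul 2))
    · exact ((hGmeas k).norm.pow_const 2).aestronglyMeasurable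
    · apply Filter.Eventually.of_forall
      intro ω
      have h2 : ‖G k ω‖ ≤ ‖gradient f (w k ω)‖ + ‖G k ω - gradient f (w k ω)‖ := by
        have : G k ω = gradient f (w k ω) + (G k ω - gradient f (w k ω)) := by abel
        nth_rewrite 1 [this]
        exact norm_add_le _ _
      rw [Real.norm_eq_abs, abs_of_nonneg (sq_nonneg _)]
      simp only [Pi.add_apply]
      nlinarith [h2, norm_nonneg (G k ω), norm_nonneg (gradient f (w k ω)),
        norm_nonneg (G k ω - gradient f (w k ω)),
        sq_nonneg (‖gradient f (w k ω)‖ - ‖G k ω - gradient f (w k ω)‖)]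
  have hgvecint : ∀ k ∈ Finset.Icc 1 N, Integrable (fun ω => gradient f (w k ω)) μ := by
    intro k hk
    apply Integrable.mono' ((integrable_const (1 : ℝ)).add (hg2int k hk))
    · exact (hgMeas k (hIccN k hk)).aestronglyMeasurable
    · apply Filter.Eventually.of_forall
      intro ω
      simp only [Pi.add_apply]
      nlinarith [sq_nonneg (‖gradient f (w k ω)‖ - 1), norm_nonneg (gradient f (w k ω))]
  have hinnerint : ∀ k ∈ Finset.Icc 1 N,
      Integrable (fun ω => (inner ℝ (gradient f (w k ω)) (G k ω - gradient f (w k ω)) : ℝ)) μ := by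
    intro k hk
    apply Integrable.mono' (((hg2int k hk).add (hvarint k hk)).const_mul (1 / 2))
    · exact (Measurable.inner (hgMeas k (hIccN k hk))
        ((hGmeas k).sub (hgMeas k (hIccN k hk)))).aestronglyMeasurable
    · apply Filter.Eventually.of_forall
      intro ω
      rw [Real.norm_eq_abs]
      have h1 := abs_real_inner_le_norm (gradient f (w k ω)) (G k ω - gradient f (w k ω))
      simp only [Pi.add_apply]
      nlinarith [sq_nonneg (‖gradient f (w k ω)‖ - ‖G k ω - gradient f (w k ω)‖)]
  have hfint : ∀ k ∈ Finset.Icc 1 (N + 1), Integrable (fun ω => f (w k ω)) μ := by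
    have key : ∀ k, 1 ≤ k → k ≤ N + 1 → Integrable (fun ω => f (w k ω)) μ := by
      intro k
      induction k with
      | zero => intro h; omega
      | succ n ih =>
        intro _ hn1
        rcases Nat.eq_zero_or_pos n with hn0 | hnpos
        · subst hn0
          have heq : (fun ω => f (w 1 ω)) = fun _ => f w0 := by
            funext ω; rw [hw1 ω]
          rw [heq]; exact integrable_const _
        · have hnN : n ∈ Finset.Icc 1 N := by rw [Finset.mem_Icc]; omega
          have hγn := hγpos n hnN
          have ihn := ih hnpos (by omega)
          apply Integrable.mono' ((((integrable_const |fstar|).add ihn.abs).add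
            ((hg2int n hnN).const_mul (γ n / 2))).add
            ((hGnormint n hnN).const_mul (γ n / 2 + L * γ n ^ 2 / 2)))
          · exact (hdiff.continuous.measurable.comp
              (hwMeas (n + 1) (by rw [Finset.mem_Icc]; omega))).aestronglyMeasurable
          · apply Filter.Eventually.of_forall
            intro ω
            have hdes := descent_lemma hdiff hLip (w n ω) (w (n + 1) ω)
            have hup := hupdate n hnN ω
            have hsub : w (n + 1) ω - w n ω = -(γ n • G n ω) := by
              rw [hup, sub_sub_cancel_left]
            rw [hsub] at hdes
            rw [inner_neg_right, real_inner_smul_right, norm_neg, norm_smul,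
              Real.norm_eq_abs, abs_of_pos hγn, mul_pow] at hdes
            have hinner := abs_real_inner_le_norm (gradient f (w n ω)) (G n ω)
            have hlow := hbdd (w (n + 1) ω)
            have habs1 := abs_nonneg (f (w n ω))
            have habs2 := le_abs_self (f (w n ω))
            have habs3 := neg_abs_le fstar
            have t1 : 0 ≤ γ n / 2 * ‖gradient f (w n ω)‖ ^ 2 :=
              mul_nonneg (by linarith) (sq_nonneg _)
            have t2 : 0 ≤ (γ n / 2 + L * γ n ^ 2 / 2) * ‖G n ω‖ ^ 2 :=
              mul_nonneg (by positivity) (sq_nonneg _)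
            have hip1 : -(γ n * (inner ℝ (gradient f (w n ω)) (G n ω) : ℝ))
                ≤ γ n * |(inner ℝ (gradient f (w n ω)) (G n ω) : ℝ)| := by
              have := neg_abs_le (inner ℝ (gradient f (w n ω)) (G n ω) : ℝ)
              nlinarith
            have hip2 : γ n * |(inner ℝ (gradient f (w n ω)) (G n ω) : ℝ)|
                ≤ γ n * (‖gradient f (w n ω)‖ * ‖G n ω‖) :=
              mul_le_mul_of_nonneg_left hinner hγn.le
            have hag : γ n * (‖gradient f (w n ω)‖ * ‖G n ω‖)
                ≤ γ n * ((‖gradient f (w n ω)‖ ^ 2 + ‖G n ω‖ ^ 2) / 2) := by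
              apply mul_le_mul_of_nonneg_left _ hγn.le
              nlinarith [sq_nonneg (‖gradient f (w n ω)‖ - ‖G n ω‖)]
            rw [Real.norm_eq_abs, abs_le]
            constructor
            · simp only [Pi.add_apply]
              linarith
            · simp only [Pi.add_apply]
              have habs0 := abs_nonneg fstar
              linarith [hdes, hip1, hip2, hag]
    intro k hk
    rw [Finset.mem_Icc] at hk
    exact key k hk.1 hk.2
  -- zero mean of inner product
  have hip0 : ∀ k ∈ Finset.Icc 1 N,
      ∫ ω, (inner ℝ (gradient f (w k ω)) (G k ω - gradient f (w k ω)) : ℝ) ∂μ = 0 := by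
    intro k hk
    haveI := hsf k
    have hkN1 := hIccN k hk
    have hmean' : μ[G k|M k] =ᵐ[μ] fun ω => gradient f (w k ω) := hmean k hk
    have hgsm : StronglyMeasurable[M k] (fun ω => gradient f (w k ω)) :=
      (hgradcont.measurable.comp (hwm k hkN1)).stronglyMeasurable
    have hδint : Integrable (fun ω => G k ω - gradient f (w k ω)) μ :=
      (hGint k hk).sub (hgvecint k hk)
    have hδ0 : μ[(fun ω => G k ω - gradient f (w k ω))|M k] =ᵐ[μ] 0 := by
      have h1 : μ[(fun ω => G k ω - gradient f (w k ω))|M k]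
          =ᵐ[μ] μ[G k|M k] - μ[(fun ω => gradient f (w k ω))|M k] := by
        have := condExp_sub (m := M k) (hGint k hk) (hgvecint k hk)
        exact this
      have h2 : μ[(fun ω => gradient f (w k ω))|M k] = fun ω => gradient f (w k ω) :=
        condExp_of_stronglyMeasurable (hM_le k) hgsm (hgvecint k hk)
      filter_upwards [h1, hmean'] with ω e1 e2
      rw [Pi.zero_apply, e1, Pi.sub_apply, h2, e2, sub_self]
    have hipeq : (fun ω => (inner ℝ (gradient f (w k ω)) (G k ω - gradient f (w k ω)) : ℝ))
        = fun ω => ∑ i, (gradient f (w k ω) i) * ((G k ω - gradient f (w k ω)) i) := by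
      funext ω
      rw [PiLp.inner_apply]
      simp [RCLike.inner_apply, conj_trivial]
      exact Finset.sum_congr rfl fun i _ => mul_comm _ _
    rw [hipeq]
    have hXYint : ∀ i : Fin p, Integrable
        (fun ω => (gradient f (w k ω) i) * ((G k ω - gradient f (w k ω)) i)) μ := by
      intro i
      apply Integrable.mono' (((hg2int k hk).add (hvarint k hk)).const_mul (1 / 2))
      · exact ((((EuclideanSpace.proj (𝕜 := ℝ) i).continuous.measurable).comp
          (hgMeas k hkN1)).mul (((EuclideanSpace.proj (𝕜 := ℝ) i).continuous.measurable).comp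
          ((hGmeas k).sub (hgMeas k hkN1)))).aestronglyMeasurable
      · apply Filter.Eventually.of_forall
        intro ω
        have b1 := coord_abs_le_norm (gradient f (w k ω)) i
        have b2 := coord_abs_le_norm (G k ω - gradient f (w k ω)) i
        have b3 := abs_nonneg (gradient f (w k ω) i)
        have b4 := abs_nonneg ((G k ω - gradient f (w k ω)) i)
        rw [Real.norm_eq_abs, abs_mul]
        simp only [Pi.add_apply]
        nlinarith [sq_nonneg (‖gradient f (w k ω)‖ - ‖G k ω - gradient f (w k ω)‖),
          mul_le_mul b1 b2 b4 (norm_nonneg _), norm_nonneg (gradient f (w k ω)),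
          norm_nonneg (G k ω - gradient f (w k ω))]
    rw [integral_finset_sum _ (fun i _ => hXYint i)]
    apply Finset.sum_eq_zero
    intro i _
    have hδi : μ[(fun ω => (G k ω - gradient f (w k ω)) i)|M k] =ᵐ[μ] 0 := by
      have hclm := condexp_comp_clm (hM_le k) (EuclideanSpace.proj (𝕜 := ℝ) i) hδint
      filter_upwards [hclm, hδ0] with ω e1 e2
      rw [Pi.zero_apply]
      have : (fun ω => (EuclideanSpace.proj (𝕜 := ℝ) i) (G k ω - gradient f (w k ω)))
          = fun ω => (G k ω - gradient f (w k ω)) i := rfl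
      rw [← this, e1, e2]
      simp
    have hXsm : StronglyMeasurable[M k] (fun ω => gradient f (w k ω) i) :=
      (((EuclideanSpace.proj (𝕜 := ℝ) i).continuous.measurable).comp
        (hgradcont.measurable.comp (hwm k hkN1))).stronglyMeasurable
    have hYint : Integrable (fun ω => (G k ω - gradient f (w k ω)) i) μ :=
      (EuclideanSpace.proj (𝕜 := ℝ) i).integrable_comp hδint
    have hXYint' : Integrable ((fun ω => gradient f (w k ω) i)
        * fun ω => (G k ω - gradient f (w k ω)) i) μ := hXYint i
    have h1 : ∫ ω, gradient f (w k ω) i * (G k ω - gradient f (w k ω)) i ∂μ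
        = ∫ ω, (μ[(fun ω => gradient f (w k ω) i)
            * (fun ω => (G k ω - gradient f (w k ω)) i)|M k]) ω ∂μ :=
      (integral_condExp (hM_le k)).symm
    have h2 := condExp_mul_of_stronglyMeasurable_left hXsm hXYint' hYint
    have h3 : (fun ω => gradient f (w k ω) i)
        * μ[(fun ω => (G k ω - gradient f (w k ω)) i)|M k] =ᵐ[μ] 0 := by
      filter_upwards [hδi] with ω e1
      rw [Pi.mul_apply, e1]
      simp
    rw [h1, integral_congr_ae (h2.trans h3)]
    simp
  -- variance bound
  have hδ2le : ∀ k ∈ Finset.Icc 1 N,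
      ∫ ω, ‖G k ω - gradient f (w k ω)‖ ^ 2 ∂μ ≤ σ ^ 2 := by
    intro k hk
    haveI := hsf k
    have hvar' : μ[(fun ω => ‖G k ω - gradient f (w k ω)‖ ^ 2)|M k]
        ≤ᵐ[μ] fun _ => σ ^ 2 := hvar k hk
    have h1 : ∫ ω, ‖G k ω - gradient f (w k ω)‖ ^ 2 ∂μ
        = ∫ ω, (μ[(fun ω => ‖G k ω - gradient f (w k ω)‖ ^ 2)|M k]) ω ∂μ :=
      (integral_condExp (hM_le k)).symm
    rw [h1]
    calc ∫ ω, (μ[(fun ω => ‖G k ω - gradient f (w k ω)‖ ^ 2)|M k]) ω ∂μ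
        ≤ ∫ _ω, σ ^ 2 ∂μ :=
          integral_mono_ae integrable_condExp (integrable_const _) hvar'
      _ = σ ^ 2 := by simp
  -- per-step inequality
  have hstep : ∀ k ∈ Finset.Icc 1 N,
      γ k * ∫ ω, ‖gradient f (w k ω)‖ ^ 2 ∂μ
        ≤ 2 * ((∫ ω, f (w k ω) ∂μ) - ∫ ω, f (w (k + 1) ω) ∂μ) + L * γ k ^ 2 * σ ^ 2 := by
    intro k hk
    have hγk := hγpos k hk
    have hγkle : L * γ k ≤ 1 := by
      have h := hγle k hk
      rw [div_eq_mul_inv, one_mul] at h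
      calc L * γ k ≤ L * L⁻¹ := mul_le_mul_of_nonneg_left h hL.le
        _ = 1 := mul_inv_cancel₀ (ne_of_gt hL)
    have hpt : ∀ ω, γ k * ‖gradient f (w k ω)‖ ^ 2
        ≤ 2 * (f (w k ω) - f (w (k + 1) ω))
          + (2 * L * γ k ^ 2 - 2 * γ k)
            * (inner ℝ (gradient f (w k ω)) (G k ω - gradient f (w k ω)) : ℝ)
          + (L * γ k ^ 2) * ‖G k ω - gradient f (w k ω)‖ ^ 2 := by
      intro ω
      have hdes := descent_lemma hdiff hLip (w k ω) (w (k + 1) ω)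
      have hsub : w (k + 1) ω - w k ω = -(γ k • G k ω) := by
        rw [hupdate k hk ω, sub_sub_cancel_left]
      rw [hsub, inner_neg_right, real_inner_smul_right, norm_neg, norm_smul,
        Real.norm_eq_abs, abs_of_pos hγk, mul_pow] at hdes
      have hGdecomp : G k ω = gradient f (w k ω) + (G k ω - gradient f (w k ω)) := by abel
      have hipG : (inner ℝ (gradient f (w k ω)) (G k ω) : ℝ)
          = ‖gradient f (w k ω)‖ ^ 2
            + inner ℝ (gradient f (w k ω)) (G k ω - gradient f (w k ω)) := by
        conv_lhs => rw [hGdecomp]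
        rw [inner_add_right, real_inner_self_eq_norm_sq]
      have hnG : ‖G k ω‖ ^ 2 = ‖gradient f (w k ω)‖ ^ 2
          + 2 * (inner ℝ (gradient f (w k ω)) (G k ω - gradient f (w k ω)) : ℝ)
          + ‖G k ω - gradient f (w k ω)‖ ^ 2 := by
        conv_lhs => rw [hGdecomp]
        exact norm_add_sq_real _ _
      rw [hipG, hnG] at hdes
      have hkey : 0 ≤ (1 - L * γ k) * (γ k * ‖gradient f (w k ω)‖ ^ 2) :=
        mul_nonneg (by linarith) (mul_nonneg hγk.le (sq_nonneg _))
      nlinarith [hdes, hkey]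
    have hint1 : Integrable (fun ω => 2 * (f (w k ω) - f (w (k + 1) ω))) μ :=
      ((hfint k (hIccN k hk)).sub (hfint (k + 1) (hIccN' k hk))).const_mul 2
    have hint2 : Integrable (fun ω => (2 * L * γ k ^ 2 - 2 * γ k)
        * (inner ℝ (gradient f (w k ω)) (G k ω - gradient f (w k ω)) : ℝ)) μ :=
      (hinnerint k hk).const_mul _
    have hint3 : Integrable (fun ω => (L * γ k ^ 2) * ‖G k ω - gradient f (w k ω)‖ ^ 2) μ :=
      (hvarint k hk).const_mul _
    have hmono : ∫ ω, γ k * ‖gradient f (w k ω)‖ ^ 2 ∂μ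
        ≤ ∫ ω, (2 * (f (w k ω) - f (w (k + 1) ω))
          + (2 * L * γ k ^ 2 - 2 * γ k)
            * (inner ℝ (gradient f (w k ω)) (G k ω - gradient f (w k ω)) : ℝ)
          + (L * γ k ^ 2) * ‖G k ω - gradient f (w k ω)‖ ^ 2) ∂μ := by
      apply integral_mono_ae ((hg2int k hk).const_mul _)
        ((hint1.add hint2).add hint3) (Filter.Eventually.of_forall hpt)
    have hvb : (L * γ k ^ 2) * ∫ ω, ‖G k ω - gradient f (w k ω)‖ ^ 2 ∂μ
        ≤ (L * γ k ^ 2) * σ ^ 2 :=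
      mul_le_mul_of_nonneg_left (hδ2le k hk) (by positivity)
    have e1 : ∫ ω, (2 * (f (w k ω) - f (w (k + 1) ω))
          + (2 * L * γ k ^ 2 - 2 * γ k)
            * (inner ℝ (gradient f (w k ω)) (G k ω - gradient f (w k ω)) : ℝ)
          + (L * γ k ^ 2) * ‖G k ω - gradient f (w k ω)‖ ^ 2) ∂μ
        = (∫ ω, (2 * (f (w k ω) - f (w (k + 1) ω))
            + (2 * L * γ k ^ 2 - 2 * γ k)
              * (inner ℝ (gradient f (w k ω)) (G k ω - gradient f (w k ω)) : ℝ)) ∂μ)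
          + ∫ ω, (L * γ k ^ 2) * ‖G k ω - gradient f (w k ω)‖ ^ 2 ∂μ :=
      integral_add (hint1.add hint2) hint3
    have e2 : ∫ ω, (2 * (f (w k ω) - f (w (k + 1) ω))
          + (2 * L * γ k ^ 2 - 2 * γ k)
            * (inner ℝ (gradient f (w k ω)) (G k ω - gradient f (w k ω)) : ℝ)) ∂μ
        = (∫ ω, 2 * (f (w k ω) - f (w (k + 1) ω)) ∂μ)
          + ∫ ω, (2 * L * γ k ^ 2 - 2 * γ k)
            * (inner ℝ (gradient f (w k ω)) (G k ω - gradient f (w k ω)) : ℝ) ∂μ :=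
      integral_add hint1 hint2
    have e3 : ∫ ω, 2 * (f (w k ω) - f (w (k + 1) ω)) ∂μ
        = 2 * ((∫ ω, f (w k ω) ∂μ) - ∫ ω, f (w (k + 1) ω) ∂μ) := by
      rw [integral_const_mul, integral_sub (hfint k (hIccN k hk)) (hfint (k + 1) (hIccN' k hk))]
    have e4 : ∫ ω, (2 * L * γ k ^ 2 - 2 * γ k)
        * (inner ℝ (gradient f (w k ω)) (G k ω - gradient f (w k ω)) : ℝ) ∂μ = 0 := by
      rw [integral_const_mul, hip0 k hk, mul_zero]
    have e5 : ∫ ω, (L * γ k ^ 2) * ‖G k ω - gradient f (w k ω)‖ ^ 2 ∂μ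
        = (L * γ k ^ 2) * ∫ ω, ‖G k ω - gradient f (w k ω)‖ ^ 2 ∂μ :=
      integral_const_mul _ _
    have e6 : ∫ ω, γ k * ‖gradient f (w k ω)‖ ^ 2 ∂μ
        = γ k * ∫ ω, ‖gradient f (w k ω)‖ ^ 2 ∂μ := integral_const_mul _ _
    linarith [hmono, e1, e2, e3, e4, e5, e6, hvb]
  -- summed inequality
  have hsum : ∑ k ∈ Finset.Icc 1 N, γ k * ∫ ω, ‖gradient f (w k ω)‖ ^ 2 ∂μ
      ≤ 2 * (f w0 - fstar) + L * σ ^ 2 * ∑ k ∈ Finset.Icc 1 N, γ k ^ 2 := by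
    have hb1 : ∫ ω, f (w 1 ω) ∂μ = f w0 := by
      have heq : (fun ω => f (w 1 ω)) = fun _ => f w0 := funext fun ω => by rw [hw1]
      rw [heq, integral_const, probReal_univ]
      simp
    have hbN : fstar ≤ ∫ ω, f (w (N + 1) ω) ∂μ := by
      have h := integral_mono_ae (integrable_const fstar)
        (hfint (N + 1) (by rw [Finset.mem_Icc]; omega))
        (Filter.Eventually.of_forall fun ω => hbdd (w (N + 1) ω))
      simpa using h
    calc ∑ k ∈ Finset.Icc 1 N, γ k * ∫ ω, ‖gradient f (w k ω)‖ ^ 2 ∂μ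
        ≤ ∑ k ∈ Finset.Icc 1 N, (2 * ((∫ ω, f (w k ω) ∂μ) - ∫ ω, f (w (k + 1) ω) ∂μ)
            + L * γ k ^ 2 * σ ^ 2) := Finset.sum_le_sum hstep
      _ = 2 * ((∫ ω, f (w 1 ω) ∂μ) - ∫ ω, f (w (N + 1) ω) ∂μ)
            + L * σ ^ 2 * ∑ k ∈ Finset.Icc 1 N, γ k ^ 2 := by
          rw [Finset.sum_add_distrib, ← Finset.mul_sum,
            tele_sum (fun k => ∫ ω, f (w k ω) ∂μ) N]
          congr 1
          rw [Finset.mul_sum]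
          apply Finset.sum_congr rfl
          intros; ring
      _ ≤ 2 * (f w0 - fstar) + L * σ ^ 2 * ∑ k ∈ Finset.Icc 1 N, γ k ^ 2 := by
          rw [hb1]
          have : (∫ ω, f (w 1 ω) ∂μ) = f w0 := hb1
          nlinarith [hbN]
  -- expectation over R
  have hR : ∫ ω, ‖gradient f (w (R ω) ω)‖ ^ 2 ∂μ
      = ∑ k ∈ Finset.Icc 1 N, (γ k / H) * ∫ ω, ‖gradient f (w k ω)‖ ^ 2 ∂μ := by
    have hpw : (fun ω => ‖gradient f (w (R ω) ω)‖ ^ 2)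
        = fun ω => ∑ k ∈ Finset.Icc 1 N,
            (if R ω = k then (1 : ℝ) else 0) * ‖gradient f (w k ω)‖ ^ 2 := by
      funext ω
      rw [Finset.sum_eq_single_of_mem (R ω) (hRrange ω)]
      · simp
      · intro b _ hne
        rw [if_neg (fun h => hne h.symm), zero_mul]
    have hindmeas : ∀ k : ℕ, Measurable (fun ω => if R ω = k then (1 : ℝ) else 0) := by
      intro k
      exact Measurable.ite (hRmeas (measurableSet_singleton k)) measurable_const
        measurable_const
    have hindint : ∀ k ∈ Finset.Icc 1 N,
        Integrable (fun ω => (if R ω = k then (1 : ℝ) else 0)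
          * ‖gradient f (w k ω)‖ ^ 2) μ := by
      intro k hk
      exact Integrable.bdd_mul (hg2int k hk) (hindmeas k).aestronglyMeasurable
        (c := 1) (Filter.Eventually.of_forall fun ω => by by_cases h : R ω = k <;> simp [h])
    rw [hpw, integral_finset_sum _ hindint]
    apply Finset.sum_congr rfl
    intro k hk
    have hφ : Measurable (fun n : ℕ => if n = k then (1 : ℝ) else 0) := measurable_from_top
    have hψ : Measurable (fun v : ℕ → EuclideanSpace ℝ (Fin p) =>
        ‖gradient f (w0 - ∑ j ∈ Finset.Icc 1 (k - 1), γ j • v j)‖ ^ 2) := by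
      apply Measurable.pow_const
      apply Measurable.norm
      apply hgradcont.measurable.comp
      apply Measurable.const_sub
      exact Finset.measurable_sum _ fun j _ => (measurable_pi_apply j).const_smul (γ j)
    have hIF := hRindep.comp hφ hψ
    have hIF' : IndepFun (fun ω => if R ω = k then (1 : ℝ) else 0)
        (fun ω => ‖gradient f (w k ω)‖ ^ 2) μ := by
      have hcompR : ((fun n : ℕ => if n = k then (1 : ℝ) else 0) ∘ R)
          = fun ω => if R ω = k then (1 : ℝ) else 0 := rfl
      have hcompG : ((fun v : ℕ → EuclideanSpace ℝ (Fin p) =>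
          ‖gradient f (w0 - ∑ j ∈ Finset.Icc 1 (k - 1), γ j • v j)‖ ^ 2)
            ∘ (fun ω k' => G k' ω))
          = fun ω => ‖gradient f (w k ω)‖ ^ 2 := by
        funext ω
        simp only [Function.comp_apply]
        rw [← hwrep' k (hIccN k hk) ω]
      rw [← hcompR, ← hcompG]
      exact hIF
    have hIndInt : Integrable (fun ω => if R ω = k then (1 : ℝ) else 0) μ := by
      apply Integrable.mono' (integrable_const (1 : ℝ)) (hindmeas k).aestronglyMeasurable
      apply Filter.Eventually.of_forall
      intro ω
      by_cases h : R ω = k <;> simp [h]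
    have hmul : ∫ ω, (if R ω = k then (1 : ℝ) else 0) * ‖gradient f (w k ω)‖ ^ 2 ∂μ
        = (∫ ω, (if R ω = k then (1 : ℝ) else 0) ∂μ)
          * ∫ ω, ‖gradient f (w k ω)‖ ^ 2 ∂μ :=
      hIF'.integral_fun_mul_eq_mul_integral hIndInt.aestronglyMeasurable (hg2int k hk).aestronglyMeasurable
    have hindval : ∫ ω, (if R ω = k then (1 : ℝ) else 0) ∂μ = γ k / H := by
      have hseteq : (fun ω => if R ω = k then (1 : ℝ) else 0)
          = Set.indicator {ω | R ω = k} (fun _ => (1 : ℝ)) := by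
        funext ω
        by_cases h : R ω = k
        · simp [h, Set.indicator_of_mem, Set.mem_setOf_eq]
        · simp [h, Set.indicator_of_notMem, Set.mem_setOf_eq]
      have hms : MeasurableSet {ω | R ω = k} := hRmeas (measurableSet_singleton k)
      rw [hseteq, integral_indicator_const _ hms, measureReal_def, hRdist k hk, smul_eq_mul, mul_one,
        ENNReal.toReal_ofReal]
      exact div_nonneg (hγpos k hk).le hHpos.le
    rw [hmul, hindval]
  -- conclusion
  rw [hR]
  have heq : ∑ k ∈ Finset.Icc 1 N, (γ k / H) * ∫ ω, ‖gradient f (w k ω)‖ ^ 2 ∂μ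
      = (1 / H) * ∑ k ∈ Finset.Icc 1 N, γ k * ∫ ω, ‖gradient f (w k ω)‖ ^ 2 ∂μ := by
    rw [Finset.mul_sum]
    apply Finset.sum_congr rfl
    intro k _; ring
  rw [heq]
  have hfinal : (1 / H) * (2 * (f w0 - fstar) + L * σ ^ 2 * ∑ k ∈ Finset.Icc 1 N, γ k ^ 2)
      = 2 * (f w0 - fstar) / H + L * σ ^ 2 / H * ∑ k ∈ Finset.Icc 1 N, γ k ^ 2 := by
    field_simp
  calc (1 / H) * ∑ k ∈ Finset.Icc 1 N, γ k * ∫ ω, ‖gradient f (w k ω)‖ ^ 2 ∂μ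
      ≤ (1 / H) * (2 * (f w0 - fstar) + L * σ ^ 2 * ∑ k ∈ Finset.Icc 1 N, γ k ^ 2) := by
        apply mul_le_mul_of_nonneg_left hsum
        positivity
    _ = _ := hfinal
end

section
/- Relation between the gradients of the narrowest and widest cells (equation (4)): Let F : (ℝ^d)^n → ℝ be differentiable, x ∈ ℝ^d, f(V^{(1)},…,V^{(n)}) = F(V^{(1)}x,…,V^{(n)}x), and f̂(W^{(1)},…,W^{(n)}) = F(ŷ^{(1)},…,ŷ^{(n)}) with ŷ^{(k)} = (∏_{j=1}^{k} W^{(j)}) x. Define the effective weights Ŵ^{(k)} = ∏_{j=1}^{k} W^{(j)}. Then for every i ∈ {1,…,n}, ∂f̂/∂W^{(i)} evaluated at (W^{(1)},…,W^{(n)}) equals Σ_{k=i}^{n} (∏_{j=i+1}^{k} W^{(j)})^T · [∂f/∂V^{(k)} evaluated at (Ŵ^{(1)},…,Ŵ^{(n)})] · (∏_{j=1}^{i−1} W^{(j)})^T, where empty products of matrices are the identity matrix. -/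
/-!
Statement 3: Relation between the gradients of the narrowest and widest cells (equation (4)).
Indices of the `n` intermediate nodes are `0, …, n-1` (the paper's `W^{(1)}, …, W^{(n)}`
correspond to `W 0, …, W (n-1)`).  The reversed product convention
`∏_{j=a}^{b} W^{(j)} = W^{(b)} ⋯ W^{(a)}` is implemented by `prodRev`; empty products are the
identity matrix.  The effective weights are `Ŵ⁽ᵏ⁾ = ∏_{j=1}^{k} W^{(j)} = prodRev W (Iic k)`.
-/

open scoped Matrix.Norms.L2Operator

open Matrix

/-- Reversed (descending-index) product of the matrices `W j`, `j ∈ s`;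
the empty product is the identity. -/
noncomputable def prodRev {n d : ℕ} (W : Fin n → Matrix (Fin d) (Fin d) ℝ)
    (s : Finset (Fin n)) : Matrix (Fin d) (Fin d) ℝ :=
  (((s.sort (· ≤ ·)).map W).reverse).prod

/-- `∂g/∂W⁽ⁱ⁾`: the `d × d` matrix whose `(a, b)` entry is the partial derivative of the scalar
function `g` of an `n`-tuple of `d × d` real matrices with respect to the `(a, b)` entry of the
`i`-th matrix argument. -/
noncomputable def matGrad {n d : ℕ}
    (g : (Fin n → Matrix (Fin d) (Fin d) ℝ) → ℝ)
    (W : Fin n → Matrix (Fin d) (Fin d) ℝ) (i : Fin n) : Matrix (Fin d) (Fin d) ℝ :=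
  Matrix.of fun a b => fderiv ℝ g W (Pi.single i (Matrix.single a b 1))

lemma prodRev_congr {n d : ℕ} {W V : Fin n → Matrix (Fin d) (Fin d) ℝ}
    {s : Finset (Fin n)} (h : ∀ j ∈ s, W j = V j) : prodRev W s = prodRev V s := by
  unfold prodRev
  congr 1
  congr 1
  exact List.map_congr_left (fun j hj => h j ((Finset.mem_sort _).mp hj))

lemma sort_union {n : ℕ} {s t : Finset (Fin n)} (h : ∀ a ∈ s, ∀ b ∈ t, a < b) :
    (s ∪ t).sort (· ≤ ·) = s.sort (· ≤ ·) ++ t.sort (· ≤ ·) := by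
  have hdisj : Disjoint s t := by
    rw [Finset.disjoint_left]
    intro a ha hat
    exact absurd rfl (h a ha a hat).ne
  refine (fun hp h2 => List.Perm.eq_of_pairwise' (Finset.pairwise_sort _ _) h2 hp) ?_ ?_
  · rw [← Multiset.coe_eq_coe]
    have hval : (s ∪ t).val = s.val + t.val := by
      rw [← Finset.disjUnion_eq_union s t hdisj]; rfl
    simp [Finset.sort_eq, hval, ← Multiset.coe_add]
  · rw [List.pairwise_append]
    refine ⟨Finset.pairwise_sort _ _, Finset.pairwise_sort _ _, ?_⟩
    intro a ha b hb
    exact (h a ((Finset.mem_sort _).mp ha) b ((Finset.mem_sort _).mp hb)).le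

lemma prodRev_union {n d : ℕ} (W : Fin n → Matrix (Fin d) (Fin d) ℝ)
    {s t : Finset (Fin n)} (h : ∀ a ∈ s, ∀ b ∈ t, a < b) :
    prodRev W (s ∪ t) = prodRev W t * prodRev W s := by
  unfold prodRev
  rw [sort_union h, List.map_append, List.reverse_append, List.prod_append]

lemma prodRev_singleton {n d : ℕ} (W : Fin n → Matrix (Fin d) (Fin d) ℝ) (i : Fin n) :
    prodRev W {i} = W i := by
  simp [prodRev]

lemma prodRev_split {n d : ℕ} (W : Fin n → Matrix (Fin d) (Fin d) ℝ)
    {i k : Fin n} (hik : i ≤ k) :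
    prodRev W (Finset.Iic k)
      = prodRev W (Finset.Ioc i k) * (W i * prodRev W (Finset.Iio i)) := by
  have h1 : Finset.Iic i ∪ Finset.Ioc i k = Finset.Iic k := by
    ext j; simp only [Finset.mem_union, Finset.mem_Iic, Finset.mem_Ioc]
    constructor
    · rintro (hj | ⟨_, hj⟩) <;> [exact hj.trans hik; exact hj]
    · intro hj; rcases le_or_gt j i with h' | h'
      · exact Or.inl h'
      · exact Or.inr ⟨h', hj⟩
  have h2 : Finset.Iio i ∪ {i} = Finset.Iic i := by
    ext j; simp [Finset.mem_Iio, Finset.mem_Iic, le_iff_lt_or_eq]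
  rw [← h1, prodRev_union W (by intro a ha b hb; exact lt_of_le_of_lt (Finset.mem_Iic.mp ha) (Finset.mem_Ioc.mp hb).1),
    ← h2, prodRev_union W (by intro a ha b hb; simp only [Finset.mem_singleton] at hb; subst hb; exact Finset.mem_Iio.mp ha),
    prodRev_singleton]

lemma differentiable_listProd {n d : ℕ} (l : List (Fin n)) :
    Differentiable ℝ (fun V : Fin n → Matrix (Fin d) (Fin d) ℝ => (l.map V).prod) := by
  induction l with
  | nil => simpa using differentiable_const (1 : Matrix (Fin d) (Fin d) ℝ)
  | cons j t ih =>
      simp only [List.map_cons, List.prod_cons]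
      exact ((ContinuousLinearMap.proj (R := ℝ)
        (φ := fun _ : Fin n => Matrix (Fin d) (Fin d) ℝ) j).differentiable).mul ih

lemma differentiable_prodRev {n d : ℕ} (s : Finset (Fin n)) :
    Differentiable ℝ (fun V : Fin n → Matrix (Fin d) (Fin d) ℝ => prodRev V s) := by
  have : (fun V : Fin n → Matrix (Fin d) (Fin d) ℝ => prodRev V s)
      = fun V => (((s.sort (· ≤ ·)).reverse).map V).prod := by
    funext V; simp [prodRev, List.map_reverse]
  rw [this]
  exact differentiable_listProd _

/-- directional derivative via a line -/
lemma fderiv_dir {E : Type*} [NormedAddCommGroup E] [NormedSpace ℝ E]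
    {g : E → ℝ} {W : E} (hg : DifferentiableAt ℝ g W) (dir : E) :
    fderiv ℝ g W dir = deriv (fun t : ℝ => g (W + t • dir)) 0 := by
  have h1 : HasDerivAt (fun t : ℝ => W + t • dir) dir 0 := by
    simpa using ((hasDerivAt_id (0 : ℝ)).smul_const dir).const_add W

  have h2 : HasDerivAt (fun t : ℝ => g (W + t • dir)) (fderiv ℝ g W dir) 0 := by
    have hg' : HasFDerivAt g (fderiv ℝ g W) ((fun t : ℝ => W + t • dir) 0) := by
      simpa using hg.hasFDerivAt
    exact hg'.comp_hasDerivAt 0 h1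
  exact h2.deriv.symm

lemma prodRev_perturb {n d : ℕ} (W : Fin n → Matrix (Fin d) (Fin d) ℝ) (i : Fin n)
    (E : Matrix (Fin d) (Fin d) ℝ) (t : ℝ) (k : Fin n) :
    prodRev (W + t • (Pi.single i E : Fin n → Matrix (Fin d) (Fin d) ℝ)) (Finset.Iic k)
      = prodRev W (Finset.Iic k)
        + t • (if i ≤ k then prodRev W (Finset.Ioc i k) * E * prodRev W (Finset.Iio i)
               else 0) := by
  by_cases hik : i ≤ k
  · rw [if_pos hik, prodRev_split _ hik, prodRev_split W hik]
    have hIoc : prodRev (W + t • (Pi.single i E : Fin n → Matrix (Fin d) (Fin d) ℝ)) (Finset.Ioc i k)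
        = prodRev W (Finset.Ioc i k) :=
      prodRev_congr fun j hj => by
        have hji : j ≠ i := ne_of_gt (Finset.mem_Ioc.mp hj).1
        simp [Pi.single_eq_of_ne hji]
    have hIio : prodRev (W + t • (Pi.single i E : Fin n → Matrix (Fin d) (Fin d) ℝ)) (Finset.Iio i)
        = prodRev W (Finset.Iio i) :=
      prodRev_congr fun j hj => by
        have hji : j ≠ i := ne_of_lt (Finset.mem_Iio.mp hj)
        simp [Pi.single_eq_of_ne hji]
    rw [hIoc, hIio]
    simp only [Pi.add_apply, Pi.smul_apply, Pi.single_eq_same]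
    simp [mul_add, add_mul, smul_mul_assoc, mul_smul_comm, mul_assoc]
  · rw [if_neg hik, smul_zero, add_zero]
    refine prodRev_congr fun j hj => by
      have hji : j ≠ i := by
        intro h; subst h; exact hik (Finset.mem_Iic.mp hj)
      simp [Pi.single_eq_of_ne hji]

lemma std_mulVec {d : ℕ} (c e : Fin d) (x : Fin d → ℝ) (r : Fin d) :
    (Matrix.single c e 1).mulVec x r = if r = c then x e else 0 := by
  simp only [Matrix.mulVec, dotProduct, Matrix.single, Matrix.of_apply]
  by_cases h : r = c
  · subst h; simp
  · rw [if_neg h]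
    exact Finset.sum_eq_zero fun j _ => by
      rw [if_neg (fun hce : c = r ∧ e = j => h hce.1.symm), zero_mul]

lemma key3 {d : ℕ} (A B : Matrix (Fin d) (Fin d) ℝ) (a b : Fin d) (x : Fin d → ℝ) :
    (A * Matrix.single a b 1 * B).mulVec x
      = ∑ c, ∑ e, (A c a * B b e) • (Matrix.single c e 1).mulVec x := by
  funext r
  have hl : (A * Matrix.single a b 1 * B).mulVec x r = A r a * B.mulVec x b := by
    simp [Matrix.mulVec, dotProduct, Matrix.mul_apply, Matrix.single,
      Finset.mul_sum, Finset.sum_mul, mul_assoc, ite_and, Finset.sum_ite_eq]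
  rw [hl]
  have hR : (∑ c, ∑ e, (A c a * B b e) • (Matrix.single c e 1).mulVec x) r
      = ∑ c, ∑ e, (A c a * B b e) * (if r = c then x e else 0) := by
    simp [std_mulVec]
  rw [hR]
  simp only [mul_ite, mul_zero]
  rw [Finset.sum_comm]
  simp [Finset.sum_ite_eq, Matrix.mulVec, dotProduct, Finset.mul_sum, mul_assoc]

noncomputable def mulVecCLM {d : ℕ} (x : Fin d → ℝ) :
    Matrix (Fin d) (Fin d) ℝ →L[ℝ] (Fin d → ℝ) :=
  LinearMap.toContinuousLinearMap
    { toFun := fun M => M.mulVec x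
      map_add' := fun M N => Matrix.add_mulVec M N x
      map_smul' := fun c M => by simp [Matrix.smul_mulVec] }

theorem narrowest_vs_widest_gradient {n d : ℕ} (hn : 1 ≤ n) (hd : 1 ≤ d)
    (F : (Fin n → (Fin d → ℝ)) → ℝ) (hF : Differentiable ℝ F)
    (x : Fin d → ℝ) (W : Fin n → Matrix (Fin d) (Fin d) ℝ) (i : Fin n) :
    matGrad (fun V => F fun k => (prodRev V (Finset.Iic k)).mulVec x) W i
      = ∑ k ∈ Finset.Ici i,
          (prodRev W (Finset.Ioc i k))ᵀ *
            matGrad (fun V => F fun k' => (V k').mulVec x)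
              (fun k' => prodRev W (Finset.Iic k')) k *
            (prodRev W (Finset.Iio i))ᵀ := by
  classical
  set Wh : Fin n → Matrix (Fin d) (Fin d) ℝ := fun k' => prodRev W (Finset.Iic k') with hWh
  set yh : Fin n → Fin d → ℝ := fun k => (prodRev W (Finset.Iic k)).mulVec x with hyh
  set L : ((Fin n → Fin d → ℝ) →L[ℝ] ℝ) := fderiv ℝ F yh with hL
  have hfdiff : Differentiable ℝ
      (fun V : Fin n → Matrix (Fin d) (Fin d) ℝ =>
        F fun k => (prodRev V (Finset.Iic k)).mulVec x) :=
    hF.comp (differentiable_pi.mpr fun k =>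
      ((mulVecCLM x).differentiable).comp (differentiable_prodRev (Finset.Iic k)))
  have hgdiff : Differentiable ℝ
      (fun V : Fin n → Matrix (Fin d) (Fin d) ℝ => F fun k' => (V k').mulVec x) :=
    hF.comp (differentiable_pi.mpr fun k' =>
      ((mulVecCLM x).differentiable).comp
        ((ContinuousLinearMap.proj (R := ℝ)
          (φ := fun _ : Fin n => Matrix (Fin d) (Fin d) ℝ) k').differentiable))
  ext a b
  -- the common direction vector
  set u : Fin n → Fin d → ℝ := fun k =>
    if i ≤ k then
      (prodRev W (Finset.Ioc i k) * Matrix.single a b 1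
        * prodRev W (Finset.Iio i)).mulVec x
    else 0 with hu
  -- LHS = L u
  have hLHS : matGrad (fun V => F fun k => (prodRev V (Finset.Iic k)).mulVec x) W i a b
      = L u := by
    show fderiv ℝ (fun V => F fun k => (prodRev V (Finset.Iic k)).mulVec x) W
        (Pi.single i (Matrix.single a b 1)) = L u
    rw [fderiv_dir (hfdiff W) _]
    have hline : (fun t : ℝ =>
        F fun k => (prodRev
          (W + t • (Pi.single i (Matrix.single a b 1) :
            Fin n → Matrix (Fin d) (Fin d) ℝ)) (Finset.Iic k)).mulVec x)
        = fun t : ℝ => F (yh + t • u) := by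
      funext t
      congr 1
      funext k
      rw [prodRev_perturb, Matrix.add_mulVec, Matrix.smul_mulVec]
      simp only [hyh, hu, Pi.add_apply, Pi.smul_apply]
      split_ifs with h <;> simp
    rw [hline, ← fderiv_dir (hF yh) u]
  -- matGrad of the widest cell
  have key2 : ∀ (k : Fin n) (c e : Fin d),
      matGrad (fun V => F fun k' => (V k').mulVec x) Wh k c e
        = L ((Pi.single k ((Matrix.single c e 1).mulVec x) : Fin n → Fin d → ℝ)) := by
    intro k c e
    show fderiv ℝ (fun V => F fun k' => (V k').mulVec x) Wh
        (Pi.single k (Matrix.single c e 1)) = _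
    rw [fderiv_dir (hgdiff Wh) _]
    have hline : (fun t : ℝ =>
        F fun k' => ((Wh + t • (Pi.single k (Matrix.single c e 1) :
          Fin n → Matrix (Fin d) (Fin d) ℝ)) k').mulVec x)
        = fun t : ℝ =>
            F (yh + t • (Pi.single k ((Matrix.single c e 1).mulVec x) : Fin n → Fin d → ℝ)) := by
      funext t
      congr 1
      funext k'
      by_cases hk : k' = k
      · subst hk
        simp only [hyh, hWh, Pi.add_apply, Pi.smul_apply, Pi.single_eq_same,
          Matrix.add_mulVec, Matrix.smul_mulVec]
      · simp [hyh, hWh, Pi.single_eq_of_ne hk, Matrix.add_mulVec]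
    rw [hline, ← fderiv_dir (hF yh) _]
  -- RHS = L u
  rw [hLHS, Matrix.sum_apply]
  have hterm : ∀ k ∈ Finset.Ici i,
      ((prodRev W (Finset.Ioc i k))ᵀ *
        matGrad (fun V => F fun k' => (V k').mulVec x) Wh k *
        (prodRev W (Finset.Iio i))ᵀ) a b
      = L (∑ e, ∑ c, (prodRev W (Finset.Ioc i k) c a * prodRev W (Finset.Iio i) b e) •
            (Pi.single k ((Matrix.single c e 1).mulVec x) : Fin n → Fin d → ℝ)) := by
    intro k _
    rw [map_sum, Matrix.mul_apply]
    refine Finset.sum_congr rfl fun e _ => ?_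
    rw [map_sum, Matrix.mul_apply, Finset.sum_mul]
    refine Finset.sum_congr rfl fun c _ => ?_
    rw [key2 k c e, Matrix.transpose_apply, Matrix.transpose_apply, _root_.map_smul]
    simp [mul_assoc, mul_comm, mul_left_comm]
  rw [Finset.sum_congr rfl hterm, ← map_sum]
  congr 1
  funext k'
  rw [hu]
  simp only [Finset.sum_apply, Pi.smul_apply, Pi.single_apply, smul_ite, smul_zero,
    Finset.sum_ite_irrel, Finset.sum_const_zero, Finset.sum_ite_eq, Finset.mem_Ici]
  split_ifs with h
  · rw [key3, Finset.sum_comm]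
  · rfl
end
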